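/- Let γ ∈ (0,1) and α > 0, and define f_α(t) := α t^{2γ} − t² − 1 for t ∈ (0,∞). Then the set {t ∈ (0,∞) : f_α(t) > 0} is nonempty if and only if α > γ^{−γ} (1−γ)^{γ−1}. -/

import Mathlib

open Set Real

/-- For `γ ∈ (0,1)` and `α > 0`, the set where `f_α(t) = α t^{2γ} − t² − 1`
is positive on `(0,∞)` is nonempty iff `α > γ^{−γ}(1−γ)^{γ−1}`. -/
theorem fA_pos_set_nonempty_iff (γ α : ℝ) (hγ : γ ∈ Ioo (0:ℝ) 1)
    (hα : 0 < α) :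
    {t : ℝ | 0 < t ∧ 0 < α * t ^ (2 * γ) - t ^ 2 - 1}.Nonempty ↔
      γ ^ (-γ) * (1 - γ) ^ (γ - 1) < α := by
  obtain ⟨hγ0, hγ1⟩ := hγ
  have h1γ : 0 < 1 - γ := by linarith
  constructor
  · rintro ⟨t, ht, hft⟩
    -- AM-GM: (t²/γ)^γ * ((1-γ)⁻¹)^(1-γ) ≤ t² + 1
    have hamgm := Real.geom_mean_le_arith_mean2_weighted hγ0.le h1γ.le
      (p₁ := t ^ 2 / γ) (p₂ := (1 - γ)⁻¹)
      (by positivity) (by positivity) (by ring)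
    have hrhs : γ * (t ^ 2 / γ) + (1 - γ) * (1 - γ)⁻¹ = t ^ 2 + 1 := by
      field_simp
    rw [hrhs] at hamgm
    have hlhs : (t ^ 2 / γ) ^ γ * ((1 - γ)⁻¹) ^ (1 - γ)
        = γ ^ (-γ) * (1 - γ) ^ (γ - 1) * t ^ (2 * γ) := by
      have e1 : (t ^ 2 / γ) ^ γ = t ^ (2 * γ) * γ ^ (-γ) := by
        rw [Real.div_rpow (by positivity) hγ0.le, ← Real.rpow_natCast t 2,
          ← Real.rpow_mul ht.le, Real.rpow_neg hγ0.le, div_eq_mul_inv]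
        norm_num
      have e2 : ((1 - γ)⁻¹) ^ (1 - γ) = (1 - γ) ^ (γ - 1) := by
        rw [← Real.rpow_neg_one (1 - γ), ← Real.rpow_mul h1γ.le]
        congr 1; ring
      rw [e1, e2]; ring
    rw [hlhs] at hamgm
    have htp : 0 < t ^ (2 * γ) := Real.rpow_pos_of_pos ht _
    have h2 : α * t ^ (2 * γ) > t ^ 2 + 1 := by linarith
    have := lt_of_le_of_lt hamgm h2
    exact lt_of_mul_lt_mul_right this htp.le
  · intro hc
    refine ⟨Real.sqrt (γ / (1 - γ)), Real.sqrt_pos.mpr (by positivity), ?_⟩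
    set s := γ / (1 - γ) with hs
    have hspos : 0 < s := by positivity
    have h2 : Real.sqrt s ^ 2 = s := Real.sq_sqrt hspos.le
    have h3 : Real.sqrt s ^ (2 * γ) = s ^ γ := by
      rw [two_mul, Real.rpow_add (Real.sqrt_pos.mpr hspos),
        ← Real.mul_rpow (Real.sqrt_nonneg s) (Real.sqrt_nonneg s),
        Real.mul_self_sqrt hspos.le]
    rw [h3, h2]
    -- need: 0 < α * s^γ - s - 1, i.e. α * s^γ > 1/(1-γ)
    have hsγ : s ^ γ = γ ^ γ * (1 - γ) ^ (-γ) := by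
      rw [hs, Real.div_rpow hγ0.le h1γ.le, Real.rpow_neg h1γ.le, div_eq_mul_inv]
    have hkey : γ ^ (-γ) * (1 - γ) ^ (γ - 1) * s ^ γ = (1 - γ)⁻¹ := by
      rw [hsγ,
        show γ ^ (-γ) * (1 - γ) ^ (γ - 1) * (γ ^ γ * (1 - γ) ^ (-γ))
          = (γ ^ (-γ) * γ ^ γ) * ((1 - γ) ^ (γ - 1) * (1 - γ) ^ (-γ)) by ring,
        ← Real.rpow_add hγ0, ← Real.rpow_add h1γ, neg_add_cancel, Real.rpow_zero,
        show γ - 1 + -γ = -1 by ring, Real.rpow_neg_one, one_mul]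
    have hsγpos : 0 < s ^ γ := Real.rpow_pos_of_pos hspos _
    have h4 : (1 - γ)⁻¹ < α * s ^ γ := by
      calc (1 - γ)⁻¹ = γ ^ (-γ) * (1 - γ) ^ (γ - 1) * s ^ γ := hkey.symm
        _ < α * s ^ γ := by exact mul_lt_mul_of_pos_right hc hsγpos
    have hs1 : s + 1 = (1 - γ)⁻¹ := by
      rw [hs]; field_simp; ring
    linarith
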